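/- Let G be a finite abelian group of order n. Let x = (x_1, ..., x_n) be a sequence in G^n with maximal repetition at most ℓ, and let w = (w_1, ..., w_n) be a sequence of integers. Then there exist a subset I of [1, n] with 1 ≤ |I| ≤ ℓ and an injection f: I → [1, n] such that ∑_{i ∈ I} w_i · x_{f(i)} = 0. -/

import Mathlib

open Finset Pointwise

section Helpers

variable {G : Type*} [AddCommGroup G] [Fintype G] [DecidableEq G]

/-- Kemperman–Scherk: if 0 has a unique representation as `s + b`, then
`|S + B| ≥ |S| + |B| - 1`. -/
theorem ks_aux : ∀ (k : ℕ) (B S : Finset G), B.card ≤ k → (0:G) ∈ S → (0:G) ∈ B →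
    (∀ s ∈ S, ∀ b ∈ B, s + b = 0 → s = 0) →
    S.card + B.card ≤ (S + B).card + 1 := by
  intro k
  induction k with
  | zero =>
    intro B S hBk h0S h0B _
    exact absurd (card_pos.mpr ⟨0, h0B⟩) (by omega)
  | succ k ih =>
    intro B S hBk h0S h0B huniq
    by_cases hterm : ∃ e ∈ S, e ≠ 0 ∧ ∃ b ∈ B, b + e ∉ S
    · obtain ⟨e, heS, hene, b₀, hb₀B, hb₀e⟩ := hterm
      classical
      set T : Finset G := B.image (· + e) with hT
      set S' : Finset G := S ∪ T with hS'
      set B' : Finset G := B.filter (fun b => b + e ∈ S) with hB'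
      have hB'subset : B' ⊆ B := filter_subset _ _
      -- b₀ not in B'
      have hb₀B' : b₀ ∉ B' := by
        intro h
        exact hb₀e (mem_filter.mp h).2
      have hB'lt : B'.card < B.card :=
        card_lt_card (ssubset_iff_of_subset hB'subset |>.mpr ⟨b₀, hb₀B, hb₀B'⟩)
      -- T \ S = (B \ B').image (· + e)
      have hTS : T \ S = (B \ B').image (· + e) := by
        ext t
        simp only [hT, hB', mem_sdiff, mem_image, mem_filter]
        constructor
        · rintro ⟨⟨b, hbB, rfl⟩, htS⟩
          exact ⟨b, ⟨hbB, fun h => htS h.2⟩, rfl⟩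
        · rintro ⟨b, ⟨hbB, hbn⟩, rfl⟩
          refine ⟨⟨b, hbB, rfl⟩, fun h => hbn ⟨hbB, h⟩⟩
      have hinj : Function.Injective (· + e) := add_left_injective e
      have hcardTS : (T \ S).card = B.card - B'.card := by
        rw [hTS, card_image_of_injective _ hinj, card_sdiff_of_subset hB'subset]
      have hScard : S'.card = S.card + (B.card - B'.card) := by
        rw [hS', ← union_sdiff_self_eq_union, card_union_of_disjoint sdiff_disjoint.symm, hcardTS]
      -- 0 ∈ S', 0 ∈ B'
      have h0S' : (0:G) ∈ S' := mem_union_left _ h0S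
      have h0B' : (0:G) ∈ B' := mem_filter.mpr ⟨h0B, by simpa using heS⟩
      -- unique rep for S', B'
      have huniq' : ∀ s ∈ S', ∀ b ∈ B', s + b = 0 → s = 0 := by
        intro s hs b hb hsb
        have hbB : b ∈ B := hB'subset hb
        have hbeS : b + e ∈ S := (mem_filter.mp hb).2
        rcases mem_union.mp hs with hsS | hsT
        · exact huniq s hsS b hbB hsb
        · obtain ⟨c, hcB, rfl⟩ := mem_image.mp hsT
          -- (c + e) + b = 0; so (b + e) + c = 0
          have h1 : (b + e) + c = 0 := by
            have := hsb; abel_nf at this ⊢; linear_combination (norm := abel) this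
          have h2 : b + e = 0 := huniq (b + e) hbeS c hcB h1
          -- then b = -e, and e ∈ S, b ∈ B with e + b = 0 gives e = 0, contradiction
          have h3 : e + b = 0 := by linear_combination (norm := abel) h2
          exact absurd (huniq e heS b hbB h3) hene
      -- S' + B' ⊆ S + B
      have hsum : S' + B' ⊆ S + B := by
        intro z hz
        obtain ⟨s, hs, b, hb, rfl⟩ := mem_add.mp hz
        have hbB : b ∈ B := hB'subset hb
        have hbeS : b + e ∈ S := (mem_filter.mp hb).2
        rcases mem_union.mp hs with hsS | hsT
        · exact add_mem_add hsS hbB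
        · obtain ⟨c, hcB, rfl⟩ := mem_image.mp hsT
          have : (c + e) + b = (b + e) + c := by abel
          rw [this]
          exact add_mem_add hbeS hcB
      have hrec := ih B' S' (by omega) h0S' h0B' huniq'
      have hle : (S' + B').card ≤ (S + B).card := card_le_card hsum
      have hB'le : B'.card ≤ B.card := card_le_card hB'subset
      omega
    · -- terminal case
      push_neg at hterm
      -- hterm : ∀ e ∈ S, e ≠ 0 → ∀ b ∈ B, b + e ∈ S
      have claimA : ∀ h ∈ AddSubmonoid.closure (B : Set G), ∀ e ∈ S, e ≠ 0 → e + h ∈ S ∧ e + h ≠ 0 := by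
        intro h hh
        induction hh using AddSubmonoid.closure_induction with
        | mem b hb =>
          intro e heS hene
          have hbB : b ∈ B := hb
          refine ⟨by rw [add_comm]; exact hterm e heS hene b hbB, ?_⟩
          intro h0
          exact hene (huniq e heS b hbB h0)
        | zero =>
          intro e heS hene
          simpa using ⟨heS, hene⟩
        | add a b ha hb iha ihb =>
          intro e heS hene
          have h1 := iha e heS hene
          have h2 := ihb (e + a) h1.1 h1.2
          rw [← add_assoc]
          exact h2
      have hSB01 : S ∩ B ⊆ {0} := by
        intro z hz
        rw [mem_singleton]
        by_contra hzne
        have hzS : z ∈ S := (mem_inter.mp hz).1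
        have hzB : z ∈ B := (mem_inter.mp hz).2
        have hnegz : -z ∈ AddSubmonoid.closure (B : Set G) := by
          have hz' : z ∈ AddSubmonoid.closure (B : Set G) := AddSubmonoid.subset_closure hzB
          have hord : addOrderOf z • z = 0 := addOrderOf_nsmul_eq_zero z
          have hpos : 0 < addOrderOf z := addOrderOf_pos z
          have : (addOrderOf z - 1) • z = -z := by
            have h5 : (addOrderOf z - 1) • z + z = 0 := by
              rw [← succ_nsmul, Nat.sub_add_cancel hpos]; exact hord
            exact eq_neg_of_add_eq_zero_left h5
          rw [← this]
          exact AddSubmonoid.nsmul_mem _ hz' _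
        have := (claimA (-z) hnegz z hzS hzne).2
        simp at this
      have hcup : S ∪ B ⊆ S + B := by
        intro z hz
        rcases mem_union.mp hz with h | h
        · simpa using add_mem_add h h0B
        · simpa using add_mem_add h0S h
      have h1 : (S ∪ B).card + (S ∩ B).card = S.card + B.card := card_union_add_card_inter S B
      have h2 : (S ∩ B).card ≤ 1 := by
        calc (S ∩ B).card ≤ ({0} : Finset G).card := card_le_card hSB01
        _ = 1 := card_singleton 0
      have h3 : (S ∪ B).card ≤ (S + B).card := card_le_card hcup
      omega

theorem ks (B S : Finset G) (h0S : (0:G) ∈ S) (h0B : (0:G) ∈ B)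
    (huniq : ∀ s ∈ S, ∀ b ∈ B, s + b = 0 → s = 0) :
    S.card + B.card ≤ (S + B).card + 1 :=
  ks_aux B.card B S le_rfl h0S h0B huniq


/-- Fibers of an additive hom on a finset are at most kernel-sized. -/
theorem fiber_card_le {A : Type*} {B : Type*} [AddCommGroup A] [AddCommGroup B] [Fintype A]
    [DecidableEq B] (φ : A →+ B) (T : Finset A) :
    T.card ≤ (univ.filter (fun a : A => φ a = 0)).card * (T.image φ).card := by
  classical
  apply card_le_mul_card_image
  intro b hb
  obtain ⟨a₀, ha₀T, ha₀⟩ := mem_image.mp hb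
  apply card_le_card_of_injOn (fun a => a - a₀)
  · intro a ha
    simp only [mem_filter, mem_univ, true_and, coe_filter, Set.mem_setOf_eq] at ha ⊢
    rw [map_sub, ha.2, ha₀, sub_self]
  · intro u _ v _ huv
    simpa using sub_left_injective huv

theorem card_eq_ker_mul_image {A : Type*} {B : Type*} [AddCommGroup A] [AddCommGroup B]
    [Fintype A] [DecidableEq A] [DecidableEq B] (φ : A →+ B) :
    Fintype.card A = (univ.filter (fun a : A => φ a = 0)).card *
      ((univ : Finset A).image φ).card := by
  classical
  rw [← Finset.card_univ (α := A),
    card_eq_sum_card_fiberwise (f := φ) (t := (univ : Finset A).image φ)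
      (fun a _ => mem_image_of_mem φ (mem_univ a))]
  rw [Finset.sum_congr rfl (g := fun _ => (univ.filter (fun a : A => φ a = 0)).card) ?_,
    Finset.sum_const, smul_eq_mul, mul_comm]
  intro b hb
  obtain ⟨a₀, _, ha₀⟩ := mem_image.mp hb
  apply Finset.card_bij' (fun a _ => a - a₀) (fun a _ => a + a₀)
  · intro a ha
    simp only [mem_filter, mem_univ, true_and] at ha ⊢
    rw [map_sub, ha, ha₀, sub_self]
  · intro a ha
    simp only [mem_filter, mem_univ, true_and] at ha ⊢
    rw [map_add, ha, ha₀, zero_add]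
  · intro a _; abel
  · intro a _; abel


/-- Abstract chain lemma. -/
theorem chain {n : ℕ} (L : ℕ) (w : Fin n → ℤ) (x : Fin n → G)
    (inc : ℕ → Finset G) (K : Finset G)
    (hK0 : (0:G) ∈ K) (hKadd : ∀ a ∈ K, ∀ b ∈ K, a + b ∈ K)
    (hincK : ∀ j, 1 ≤ j → j ≤ L → inc j ⊆ K)
    (hext : ∀ j, 1 ≤ j → j ≤ L → ∀ a ∈ inc j, ∀ (I : Finset (Fin n)) (f : Fin n → Fin n),
      Set.InjOn f I → I.card < j →
      ∃ i₁, i₁ ∉ I ∧ ∃ t₁, t₁ ∉ I.image f ∧ w i₁ • x t₁ = a)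
    (hbig : K.card ≤ ∑ j ∈ Finset.Icc 1 L, (inc j).card) :
    ∃ (I : Finset (Fin n)) (f : Fin n → Fin n),
      1 ≤ I.card ∧ I.card ≤ L ∧ Set.InjOn f I ∧ ∑ i ∈ I, w i • x (f i) = 0 := by
  classical
  by_contra hwin
  push_neg at hwin
  -- hwin : ∀ I f, 1 ≤ I.card → I.card ≤ L → InjOn f I → sum ≠ 0
  -- the chain of sets
  set N : ℕ → Finset G := fun j => Nat.rec {0} (fun j' Nj' => Nj' + insert (0:G) (inc (j'+1))) j
    with hN
  have hN0 : N 0 = {0} := rfl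
  have hNsucc : ∀ j, N (j+1) = N j + insert (0:G) (inc (j+1)) := fun j => rfl
  have hzeroN : ∀ j, (0:G) ∈ N j := by
    intro j
    induction j with
    | zero => simp [hN0]
    | succ j ih =>
      rw [hNsucc]
      exact mem_add.mpr ⟨0, ih, 0, mem_insert_self 0 _, zero_add 0⟩
  -- achievability
  have hach : ∀ j, j ≤ L → ∀ s ∈ N j, ∃ (I : Finset (Fin n)) (f : Fin n → Fin n),
      I.card ≤ j ∧ Set.InjOn f I ∧ ∑ i ∈ I, w i • x (f i) = s := by
    intro j
    induction j with
    | zero =>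
      intro _ s hs
      rw [hN0, mem_singleton] at hs
      exact ⟨∅, id, by simp, by simp [Set.injOn_empty], by simp [hs.symm]⟩
    | succ j ih =>
      intro hjL s hs
      rw [hNsucc, mem_add] at hs
      obtain ⟨s', hs', b, hb, rfl⟩ := hs
      obtain ⟨I, f, hIcard, hIinj, hIsum⟩ := ih (by omega) s' hs'
      rcases mem_insert.mp hb with rfl | hbinc
      · exact ⟨I, f, by omega, hIinj, by simpa using hIsum⟩
      · obtain ⟨i₁, hi₁, t₁, ht₁, hw⟩ :=
          hext (j+1) (by omega) hjL b hbinc I f hIinj (by omega)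
        refine ⟨insert i₁ I, Function.update f i₁ t₁, ?_, ?_, ?_⟩
        · rw [card_insert_of_notMem hi₁]; omega
        · intro u hu v hv huv
          simp only [coe_insert, Set.mem_insert_iff] at hu hv
          rcases hu with rfl | hu <;> rcases hv with rfl | hv
          · rfl
          · exfalso
            rw [Function.update_self, Function.update_of_ne (by rintro rfl; exact hi₁ hv)] at huv
            exact ht₁ (mem_image.mpr ⟨v, hv, huv.symm⟩)
          · exfalso
            rw [Function.update_self, Function.update_of_ne (by rintro rfl; exact hi₁ hu)] at huv
            exact ht₁ (mem_image.mpr ⟨u, hu, huv⟩)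
          · rw [Function.update_of_ne (by rintro rfl; exact hi₁ hu),
              Function.update_of_ne (by rintro rfl; exact hi₁ hv)] at huv
            exact hIinj hu hv huv
        · rw [sum_insert hi₁, Function.update_self]
          have : ∀ i ∈ I, w i • x (Function.update f i₁ t₁ i) = w i • x (f i) := by
            intro i hi
            rw [Function.update_of_ne (by rintro rfl; exact hi₁ hi)]
          rw [sum_congr rfl this, hw, hIsum]
          exact add_comm b s'
  -- no-win at each step
  have hnowin : ∀ j, 1 ≤ j → j ≤ L → ∀ s ∈ N (j-1), ∀ b ∈ inc j, s + b ≠ 0 := by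
    intro j hj hjL s hs b hb hsb
    obtain ⟨I, f, hIcard, hIinj, hIsum⟩ := hach (j-1) (by omega) s hs
    obtain ⟨i₁, hi₁, t₁, ht₁, hw⟩ := hext j hj hjL b hb I f hIinj (by omega)
    apply hwin (insert i₁ I) (Function.update f i₁ t₁)
    · rw [card_insert_of_notMem hi₁]; omega
    · rw [card_insert_of_notMem hi₁]; omega
    · intro u hu v hv huv
      simp only [coe_insert, Set.mem_insert_iff] at hu hv
      rcases hu with rfl | hu <;> rcases hv with rfl | hv
      · rfl
      · exfalso
        rw [Function.update_self, Function.update_of_ne (by rintro rfl; exact hi₁ hv)] at huv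
        exact ht₁ (mem_image.mpr ⟨v, hv, huv.symm⟩)
      · exfalso
        rw [Function.update_self, Function.update_of_ne (by rintro rfl; exact hi₁ hu)] at huv
        exact ht₁ (mem_image.mpr ⟨u, hu, huv⟩)
      · rw [Function.update_of_ne (by rintro rfl; exact hi₁ hu),
          Function.update_of_ne (by rintro rfl; exact hi₁ hv)] at huv
        exact hIinj hu hv huv
    · rw [sum_insert hi₁, Function.update_self]
      have : ∀ i ∈ I, w i • x (Function.update f i₁ t₁ i) = w i • x (f i) := by
        intro i hi
        rw [Function.update_of_ne (by rintro rfl; exact hi₁ hi)]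
      rw [sum_congr rfl this, hw, hIsum]
      linear_combination (norm := abel) hsb
  -- growth
  have hgrow : ∀ j, j ≤ L → 1 + ∑ t ∈ Finset.Icc 1 j, (inc t).card ≤ (N j).card := by
    intro j
    induction j with
    | zero => intro _; simp [hN0]
    | succ j ih =>
      intro hjL
      have h0inc : (0:G) ∉ inc (j+1) := by
        intro h
        exact hnowin (j+1) (by omega) hjL 0 (by simpa using hzeroN j) 0 h (by rw [add_zero])
      have huniq : ∀ s ∈ N j, ∀ b ∈ insert (0:G) (inc (j+1)), s + b = 0 → s = 0 := by
        intro s hs b hb hsb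
        rcases mem_insert.mp hb with rfl | hb
        · simpa using hsb
        · exact absurd hsb (by simpa using hnowin (j+1) (by omega) hjL s hs b hb)
      have hks := ks (insert (0:G) (inc (j+1))) (N j) (hzeroN j) (mem_insert_self _ _) huniq
      rw [card_insert_of_notMem h0inc] at hks
      rw [hNsucc, Finset.sum_Icc_succ_top (by omega)]
      have := ih (by omega)
      omega
  -- N L ⊆ K
  have hNK : ∀ j, j ≤ L → N j ⊆ K := by
    intro j
    induction j with
    | zero =>
      intro _ z hz
      rw [hN0, mem_singleton] at hz
      rwa [hz]
    | succ j ih =>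
      intro hjL z hz
      rw [hNsucc, mem_add] at hz
      obtain ⟨s, hs, b, hb, rfl⟩ := hz
      have hsK : s ∈ K := ih (by omega) hs
      rcases mem_insert.mp hb with rfl | hb
      · simpa using hsK
      · exact hKadd s hsK b (hincK (j+1) (by omega) hjL hb)
  have h1 := hgrow L le_rfl
  have h2 := card_le_card (hNK L le_rfl)
  omega


theorem exists_fresh {α : Type*} [DecidableEq α] {s t : Finset α} (h : t.card < s.card) :
    ∃ z ∈ s, z ∉ t := by
  by_contra hc
  push_neg at hc
  exact absurd (Finset.card_le_card hc) (by omega)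

theorem double_count {α β : Type*} [Fintype α] [DecidableEq α] [DecidableEq β] (L : ℕ)
    (res : α → β) (T : Finset β)
    (hT : ∀ a : α, res a ∈ T)
    (hL : ∀ b : β, (univ.filter (fun a => res a = b)).card ≤ L) :
    ∑ j ∈ Finset.Icc 1 L, (T.filter (fun b => j ≤ (univ.filter (fun a => res a = b)).card)).card
      = Fintype.card α := by
  classical
  have h1 : ∀ j, (T.filter (fun b => j ≤ (univ.filter (fun a => res a = b)).card)).card
      = ∑ b ∈ T, if j ≤ (univ.filter (fun a => res a = b)).card then 1 else 0 := by
    intro j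
    rw [card_filter]
  simp_rw [h1]
  rw [Finset.sum_comm, ← Finset.card_univ,
    card_eq_sum_card_fiberwise (f := res) (t := T) (fun a _ => hT a)]
  apply Finset.sum_congr rfl
  intro b _
  rw [Finset.sum_ite, Finset.sum_const_zero, add_zero, Finset.sum_const, smul_eq_mul, mul_one]
  have : (Finset.Icc 1 L).filter (fun j => j ≤ (univ.filter (fun a => res a = b)).card)
      = Finset.Icc 1 ((univ.filter (fun a => res a = b)).card) := by
    ext j
    simp only [mem_filter, Finset.mem_Icc]
    constructor
    · rintro ⟨⟨h1', _⟩, h3⟩; exact ⟨h1', h3⟩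
    · rintro ⟨h1', h2'⟩; exact ⟨⟨h1', le_trans h2' (hL b)⟩, h2'⟩
  rw [this, Nat.card_Icc]
  omega

/-- Case 1: some weight congruence class mod exponent has ≥ L elements. -/
theorem case1 {n : ℕ} (L : ℕ) (hL1 : 1 ≤ L) (w : Fin n → ℤ) (x : Fin n → G)
    (hn : Fintype.card G = n) (i₀ : Fin n)
    (hcls : L ≤ (univ.filter (fun i' => (w i' : ZMod (AddMonoid.exponent G)) = (w i₀ : ZMod (AddMonoid.exponent G)))).card)
    (hfib : ∀ t : Fin n, (univ.filter (fun t' => x t' = x t)).card ≤ L) :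
    ∃ (I : Finset (Fin n)) (f : Fin n → Fin n),
      1 ≤ I.card ∧ I.card ≤ L ∧ Set.InjOn f I ∧ ∑ i ∈ I, w i • x (f i) = 0 := by
  classical
  set e := AddMonoid.exponent G with he
  -- same residue implies same action
  have hres : ∀ k₁ k₂ : ℤ, ((k₁ : ZMod e) = (k₂ : ZMod e)) → ∀ g : G, k₁ • g = k₂ • g := by
    intro k₁ k₂ hk g
    have hdvd : (e : ℤ) ∣ k₁ - k₂ := by
      rwa [← ZMod.intCast_zmod_eq_zero_iff_dvd, Int.cast_sub, sub_eq_zero]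
    obtain ⟨m, hm⟩ := hdvd
    have h0 : (k₁ - k₂) • g = 0 := by
      rw [hm, mul_comm, mul_zsmul, natCast_zsmul, AddMonoid.exponent_nsmul_eq_zero, smul_zero]
    have h2 := sub_smul k₁ k₂ g
    rw [h0] at h2
    exact sub_eq_zero.mp h2.symm
  set φ : G →+ G := AddMonoidHom.mk' (fun g : G => w i₀ • g) (fun a b => smul_add (w i₀) a b)
    with hφ
  set K : Finset G := (univ : Finset G).image φ with hK
  set inc : ℕ → Finset G := fun j =>
    ((univ.image x).filter (fun a => j ≤ (univ.filter (fun t' => x t' = a)).card)).image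
      (fun a => w i₀ • a) with hinc
  apply chain L w x inc K
  · exact mem_image.mpr ⟨0, mem_univ 0, map_zero φ⟩
  · rintro a ha b hb
    obtain ⟨y, _, rfl⟩ := mem_image.mp ha
    obtain ⟨z, _, rfl⟩ := mem_image.mp hb
    exact mem_image.mpr ⟨y + z, mem_univ _, map_add φ y z⟩
  · intro j _ _ z hz
    obtain ⟨a, _, rfl⟩ := mem_image.mp hz
    exact mem_image.mpr ⟨a, mem_univ a, rfl⟩
  · -- extension
    intro j hj1 hjL a ha I f hinj hIcard
    obtain ⟨v, hv, rfl⟩ := mem_image.mp ha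
    have hvcard : j ≤ (univ.filter (fun t' => x t' = v)).card := (mem_filter.mp hv).2
    -- fresh weight index
    have h1 : I.card < (univ.filter (fun i' => (w i' : ZMod e) = (w i₀ : ZMod e))).card := by
      omega
    obtain ⟨i₁, hi₁mem, hi₁⟩ := exists_fresh h1
    -- fresh slot
    have h2 : (I.image f).card < (univ.filter (fun t' => x t' = v)).card := by
      have := Finset.card_image_le (s := I) (f := f)
      omega
    obtain ⟨t₁, ht₁mem, ht₁⟩ := exists_fresh h2
    refine ⟨i₁, hi₁, t₁, ht₁, ?_⟩
    have hx : x t₁ = v := (mem_filter.mp ht₁mem).2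
    have hww := (mem_filter.mp hi₁mem).2
    rw [hx, hres (w i₁) (w i₀) hww v]
  · -- cardinality
    have hκ : Fintype.card G = (univ.filter (fun g : G => φ g = 0)).card * K.card :=
      card_eq_ker_mul_image φ
    set κ := (univ.filter (fun g : G => φ g = 0)).card with hκdef
    have hWsum : ∑ j ∈ Finset.Icc 1 L,
        ((univ.image x).filter (fun a => j ≤ (univ.filter (fun t' => x t' = a)).card)).card = n := by
      rw [double_count L x (univ.image x) (fun t => mem_image_of_mem x (mem_univ t))
        (fun b => ?_), Fintype.card_fin]
      by_cases hbx : ∃ t, x t = b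
      · obtain ⟨t, rfl⟩ := hbx
        exact hfib t
      · push_neg at hbx
        have : (univ.filter (fun a => x a = b)) = ∅ := by
          apply filter_eq_empty_iff.mpr
          intro t _
          exact hbx t
        rw [this]
        simp
    have hWle : ∀ j, ((univ.image x).filter (fun a => j ≤ (univ.filter (fun t' => x t' = a)).card)).card
        ≤ κ * (inc j).card := by
      intro j
      have := fiber_card_le φ ((univ.image x).filter (fun a => j ≤ (univ.filter (fun t' => x t' = a)).card))
      calc ((univ.image x).filter _).card ≤ κ * (((univ.image x).filter (fun a => j ≤ (univ.filter (fun t' => x t' = a)).card)).image φ).card := this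
      _ = κ * (inc j).card := rfl
    have hsum : n ≤ κ * ∑ j ∈ Finset.Icc 1 L, (inc j).card := by
      rw [← hWsum, Finset.mul_sum]
      exact Finset.sum_le_sum (fun j _ => hWle j)
    have hκpos : 1 ≤ κ := by
      rw [hκdef]
      apply card_pos.mpr
      exact ⟨0, mem_filter.mpr ⟨mem_univ 0, map_zero φ⟩⟩
    have : κ * K.card ≤ κ * ∑ j ∈ Finset.Icc 1 L, (inc j).card := by
      rw [← hκ, hn]; exact hsum
    exact Nat.le_of_mul_le_mul_left this (by omega)


/-- Case 2: all weight congruence classes mod the exponent have ≤ L elements. -/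
theorem case2 {n : ℕ} (L : ℕ) (hL1 : 1 ≤ L) (w : Fin n → ℤ) (x : Fin n → G)
    (hn : Fintype.card G = n) (t₀ : Fin n)
    (hcls : ∀ i : Fin n, (univ.filter (fun i' => (w i' : ZMod (AddMonoid.exponent G)) = (w i : ZMod (AddMonoid.exponent G)))).card ≤ L)
    (hfibL : (univ.filter (fun t' => x t' = x t₀)).card = L) :
    ∃ (I : Finset (Fin n)) (f : Fin n → Fin n),
      1 ≤ I.card ∧ I.card ≤ L ∧ Set.InjOn f I ∧ ∑ i ∈ I, w i • x (f i) = 0 := by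
  classical
  set e := AddMonoid.exponent G with he
  haveI : NeZero e := ⟨AddMonoid.exponent_ne_zero_of_finite⟩
  set a : G := x t₀ with ha
  set χ : ZMod e →+ G := ZMod.lift e ⟨(zmultiplesHom G) a, by
    simp only [zmultiplesHom_apply]
    rw [natCast_zsmul]
    exact AddMonoid.exponent_nsmul_eq_zero a⟩ with hχ
  have hχcast : ∀ k : ℤ, χ ((k : ZMod e)) = k • a := fun k => ZMod.lift_coe _ _ k
  set res : Fin n → ZMod e := fun i => ((w i : ZMod e)) with hres
  set μ : ZMod e → ℕ := fun r => (univ.filter (fun i => res i = r)).card with hμ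
  set Bj : ℕ → Finset (ZMod e) := fun j => univ.filter (fun r => j ≤ μ r) with hBj
  set inc : ℕ → Finset G := fun j => (Bj j).image χ with hinc
  set K : Finset G := (univ : Finset (ZMod e)).image χ with hK
  apply chain L w x inc K
  · exact mem_image.mpr ⟨0, mem_univ 0, map_zero χ⟩
  · rintro p hp q hq
    obtain ⟨y, _, rfl⟩ := mem_image.mp hp
    obtain ⟨z, _, rfl⟩ := mem_image.mp hq
    exact mem_image.mpr ⟨y + z, mem_univ _, map_add χ y z⟩
  · intro j _ _ z hz
    obtain ⟨r, _, rfl⟩ := mem_image.mp hz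
    exact mem_image.mpr ⟨r, mem_univ r, rfl⟩
  · -- extension
    intro j hj1 hjL z hz I f hinj hIcard
    obtain ⟨r, hr, rfl⟩ := mem_image.mp hz
    have hrμ : j ≤ μ r := (mem_filter.mp hr).2
    -- there is an index with this residue (μ r ≥ j ≥ 1)
    have hμpos : 0 < μ r := by omega
    obtain ⟨i₀, hi₀⟩ := card_pos.mp hμpos
    have hi₀res : res i₀ = r := (mem_filter.mp hi₀).2
    -- fresh weight index within the residue class of i₀
    have h1 : I.card < (univ.filter (fun i => res i = r)).card := by
      change I.card < μ r
      omega
    obtain ⟨i₁, hi₁mem, hi₁⟩ := exists_fresh h1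
    -- fresh slot within fiber of a
    have h2 : (I.image f).card < (univ.filter (fun t' => x t' = a)).card := by
      have := Finset.card_image_le (s := I) (f := f)
      rw [hfibL]
      omega
    obtain ⟨t₁, ht₁mem, ht₁⟩ := exists_fresh h2
    refine ⟨i₁, hi₁, t₁, ht₁, ?_⟩
    have hx : x t₁ = a := (mem_filter.mp ht₁mem).2
    have hwr : res i₁ = r := (mem_filter.mp hi₁mem).2
    rw [hx, ← hχcast (w i₁)]
    exact congrArg χ hwr
  · -- cardinality
    have hcardZ : Fintype.card (ZMod e) = (univ.filter (fun r : ZMod e => χ r = 0)).card * K.card :=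
      card_eq_ker_mul_image χ
    set κ := (univ.filter (fun r : ZMod e => χ r = 0)).card with hκdef
    have hbnd : ∀ r : ZMod e, (univ.filter (fun i => res i = r)).card ≤ L := by
      intro r
      by_cases hres2 : ∃ i, res i = r
      · obtain ⟨i, rfl⟩ := hres2
        exact hcls i
      · push_neg at hres2
        have hempty : (univ.filter (fun i => res i = r)) = ∅ :=
          filter_eq_empty_iff.mpr (fun i _ => hres2 i)
        rw [hempty]
        simp
    have hBsum : ∑ j ∈ Finset.Icc 1 L, (Bj j).card = n := by
      have hdc := double_count L res (univ : Finset (ZMod e)) (fun i => mem_univ _) hbnd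
      rw [← Fintype.card_fin n, ← hdc]
    have hBle : ∀ j, (Bj j).card ≤ κ * (inc j).card := fun j => fiber_card_le χ (Bj j)
    have hsum : n ≤ κ * ∑ j ∈ Finset.Icc 1 L, (inc j).card := by
      rw [← hBsum, Finset.mul_sum]
      exact Finset.sum_le_sum (fun j _ => hBle j)
    have hκpos : 1 ≤ κ := by
      rw [hκdef]
      exact card_pos.mpr ⟨0, mem_filter.mpr ⟨mem_univ 0, map_zero χ⟩⟩
    have hn0 : 0 < n := by
      rw [← hn]
      exact Fintype.card_pos
    have hen : e ≤ n := by
      have hdvd : e ∣ n := by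
        rw [← hn, he]
        exact AddGroup.exponent_dvd_card
      exact Nat.le_of_dvd hn0 hdvd
    have hfinal : κ * K.card ≤ κ * ∑ j ∈ Finset.Icc 1 L, (inc j).card := by
      calc κ * K.card = Fintype.card (ZMod e) := hcardZ.symm
      _ = e := ZMod.card e
      _ ≤ n := hen
      _ ≤ κ * ∑ j ∈ Finset.Icc 1 L, (inc j).card := hsum
    exact Nat.le_of_mul_le_mul_left hfinal (by omega)


/-- Top-level assembly. -/
theorem main_thm {G : Type*} [AddCommGroup G] [Fintype G] [DecidableEq G] (n ℓ : ℕ)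
    (hn : Fintype.card G = n) (x : Fin n → G) (w : Fin n → ℤ)
    (hrep : ∀ a : G, (Finset.univ.filter (fun i => x i = a)).card ≤ ℓ) :
    ∃ (I : Finset (Fin n)) (f : Fin n → Fin n),
      1 ≤ I.card ∧ I.card ≤ ℓ ∧ Set.InjOn f I ∧ ∑ i ∈ I, w i • x (f i) = 0 := by
  classical
  have hn0 : 0 < n := hn ▸ Fintype.card_pos
  have hne : (univ : Finset (Fin n)).Nonempty := ⟨⟨0, hn0⟩, mem_univ _⟩
  obtain ⟨t₀, _, hmax⟩ := Finset.exists_max_image univ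
    (fun t => (univ.filter (fun t' => x t' = x t)).card) hne
  set L := (univ.filter (fun t' => x t' = x t₀)).card with hL
  have hL1 : 1 ≤ L := card_pos.mpr ⟨t₀, mem_filter.mpr ⟨mem_univ _, rfl⟩⟩
  have hLl : L ≤ ℓ := hrep (x t₀)
  have hfib : ∀ t, (univ.filter (fun t' => x t' = x t)).card ≤ L := fun t => hmax t (mem_univ t)
  by_cases hcase : ∃ i₀ : Fin n, L ≤ (univ.filter (fun i' =>
      (w i' : ZMod (AddMonoid.exponent G)) = (w i₀ : ZMod (AddMonoid.exponent G)))).card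
  · obtain ⟨i₀, hbig⟩ := hcase
    obtain ⟨I, f, h1, h2, h3, h4⟩ := case1 L hL1 w x hn i₀ hbig hfib
    exact ⟨I, f, h1, le_trans h2 hLl, h3, h4⟩
  · push_neg at hcase
    obtain ⟨I, f, h1, h2, h3, h4⟩ := case2 L hL1 w x hn t₀
      (fun i => le_of_lt (hcase i)) rfl
    exact ⟨I, f, h1, le_trans h2 hLl, h3, h4⟩

end Helpers

theorem stmt_1 {G : Type*} [AddCommGroup G] [Fintype G] [DecidableEq G] (n ℓ : ℕ)
    (hn : Fintype.card G = n) (x : Fin n → G) (w : Fin n → ℤ)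
    (hrep : ∀ a : G, (Finset.univ.filter (fun i => x i = a)).card ≤ ℓ) :
    ∃ (I : Finset (Fin n)) (f : Fin n → Fin n),
      1 ≤ I.card ∧ I.card ≤ ℓ ∧ Set.InjOn f I ∧ ∑ i ∈ I, w i • x (f i) = 0 :=
  main_thm n ℓ hn x w hrep
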